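/- arXiv:2206.09159 — 3 statements merged into one kernel-verified Lean document; each statement's English description precedes it below -/
import Mathlib

section
/- Assume n >= 2f+1 and the set D of dishonest players has exactly f elements. Then for every adversary assignment (w, u) satisfying (A1)-(A4): (IC1) any two honest players i, i' distinct from S have equal outputs, g([S], i) = g([S], i'); and (IC2) if moreover the initial primary S is honest, then g([S], i) = m_S for every honest player i ≠ S, where m_S = w([S], i) is S's common multicast value. That is, the quantum Byzantine agreement protocol reaches consensus with fault tolerance n >= 2f+1. -/
namespace QBA

/-- The majority function: returns the element of `M` occurring most often in `L`,
with ties broken by taking the least such element in the linear order,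
and returning the default `d` on the empty list. -/
def maj {M : Type*} [LinearOrder M] (d : M) (L : List M) : M :=
  let s := L.toFinset.filter fun m => ∀ m' ∈ L.toFinset, L.count m' ≤ L.count m
  if h : s.Nonempty then s.min' h else d

/-- A route: a list of pairwise distinct players with head `S`
and length (depth) between `1` and `f`.  Its primary is its last entry,
and its backups are the players not occurring in it. -/
def IsRoute (n f : ℕ) (S : Fin n) (ζ : List (Fin n)) : Prop :=
  ζ.Nodup ∧ ζ.head? = some S ∧ 1 ≤ ζ.length ∧ ζ.length ≤ f

/-- The primary (last entry) of `ζ` is honest (not in `D`). -/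
def HonestPrimary {n : ℕ} (D : Finset (Fin n)) (ζ : List (Fin n)) : Prop :=
  ∀ q ∈ ζ.getLast?, q ∉ D

/-- An adversary assignment `(w, u)`: `w ζ i` is the message backup `i` accepts from
`ζ`'s primary, `u ζ j i` the message forwarder `j` forwards to verifier `i`,
subject to conditions (A1)–(A4). -/
structure Adversary (n f : ℕ) (S : Fin n) (D : Finset (Fin n)) (M : Type*) where
  w : List (Fin n) → Fin n → M
  u : List (Fin n) → Fin n → Fin n → M
  A1 : ∀ ζ : List (Fin n), IsRoute n f S ζ → HonestPrimary D ζ →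
    ∀ i i' : Fin n, i ∉ ζ → i' ∉ ζ → w ζ i = w ζ i'
  A2 : ∀ (ζ : List (Fin n)) (p : Fin n), IsRoute n f S ζ → p ∉ ζ → p ∉ D →
    IsRoute n f S (ζ ++ [p]) → ∀ i : Fin n, i ∉ ζ ++ [p] → w (ζ ++ [p]) i = w ζ p
  A3 : ∀ (ζ : List (Fin n)) (p : Fin n), IsRoute n f S ζ → HonestPrimary D ζ →
    p ∉ ζ → p ∈ D → IsRoute n f S (ζ ++ [p]) →
    ∀ i : Fin n, i ∉ ζ ++ [p] → i ∉ D → w (ζ ++ [p]) i = w ζ p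
  A4 : ∀ (ζ : List (Fin n)) (j i : Fin n), IsRoute n f S ζ → j ∉ ζ → i ∉ ζ → i ≠ j →
    (j ∉ D ∨ HonestPrimary D ζ) → u ζ j i = w ζ j

/-- Fuel-indexed gathering value; for a route `ζ` the fuel is `f - ζ.length`, so fuel `0`
corresponds to the bottom layer `ζ.length = f`. -/
def gAux {n f : ℕ} {S : Fin n} {D : Finset (Fin n)} {M : Type*} [LinearOrder M] [Inhabited M]
    (A : Adversary n f S D M) : ℕ → List (Fin n) → Fin n → M
  | 0, ζ, i =>
      maj default (A.w ζ i ::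
        (((List.finRange n).filter fun j => decide (j ∉ ζ ∧ j ≠ i)).map fun j => A.u ζ j i))
  | k + 1, ζ, i =>
      maj default (((List.finRange n).filter fun j => decide (j ∉ ζ)).map
        fun j => if j = i then A.w ζ i else gAux A k (ζ ++ [j]) i)

/-- The gathering value `g(ζ, i)` of an honest backup `i` of the route `ζ`,
defined by downward recursion on depth: at the bottom layer `ζ.length = f` it is the
majority of `w(ζ, i)` together with `u(ζ, j, i)` over all backups `j ≠ i` of `ζ`;
above the bottom layer it is the majority, over all backups `j` of `ζ`, of
`g(ζ ++ [j], i)` (where the `j = i` entry is `w(ζ, i)`). -/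
def g {n f : ℕ} {S : Fin n} {D : Finset (Fin n)} {M : Type*} [LinearOrder M] [Inhabited M]
    (A : Adversary n f S D M) (ζ : List (Fin n)) (i : Fin n) : M :=
  gAux A (f - ζ.length) ζ i

/-! ### Auxiliary lemmas -/

theorem decide_and' (p q : Prop) [Decidable p] [Decidable q] :
    decide (p ∧ q) = (decide p && decide q) := by
  by_cases hp : p <;> by_cases hq : q <;> simp [hp, hq]

theorem maj_perm {M : Type*} [LinearOrder M] (d : M) {L L' : List M} (h : L.Perm L') :
    maj d L = maj d L' := by
  unfold maj
  have h1 : L.toFinset = L'.toFinset := List.toFinset_eq_of_perm _ _ h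
  simp only [h1, h.count_eq]

theorem count_add_count_le {M : Type*} [DecidableEq M] (L : List M) {v m : M} (hm : m ≠ v) :
    L.count m + L.count v ≤ L.length := by
  have h1 : L.count m ≤ L.countP (fun a => decide ¬((a == v) = true)) := by
    rw [List.count_eq_countP]
    apply List.countP_mono_left
    intro x _ hx
    simp_all
  have h2 : L.length = L.countP (fun x => x == v) + L.countP (fun a => decide ¬((a == v) = true)) :=
    List.length_eq_countP_add_countP _
  have h3 : L.count v = L.countP (fun x => x == v) := List.count_eq_countP
  omega

theorem maj_eq_of_majority {M : Type*} [LinearOrder M] (d : M) {L : List M} {v : M}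
    (hv : L.length < 2 * L.count v) : maj d L = v := by
  have hvL : v ∈ L := by
    rw [← List.count_pos_iff]; have : L.count v ≤ L.length := List.count_le_length; omega
  have key : ∀ m, m ≠ v → L.count m < L.count v := by
    intro m hm
    have := count_add_count_le L hm
    omega
  unfold maj
  set s := L.toFinset.filter fun m => ∀ m' ∈ L.toFinset, L.count m' ≤ L.count m with hs
  have hvs : v ∈ s := by
    rw [hs, Finset.mem_filter]
    refine ⟨List.mem_toFinset.2 hvL, fun m' _ => ?_⟩
    rcases eq_or_ne m' v with rfl | hne
    · exact le_refl _
    · exact (key m' hne).le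
  have hssub : s = {v} := by
    apply Finset.eq_singleton_iff_unique_mem.2
    refine ⟨hvs, fun m hm => ?_⟩
    by_contra hne
    rw [hs, Finset.mem_filter] at hm
    have := hm.2 v (List.mem_toFinset.2 hvL)
    have := key m hne
    omega
  rw [dif_pos ⟨v, hvs⟩]
  simp [hssub]

theorem maj_const {M : Type*} [LinearOrder M] (d : M) {L : List M} {v : M}
    (hne : L ≠ []) (h : ∀ x ∈ L, x = v) : maj d L = v := by
  apply maj_eq_of_majority
  have h1 : L.count v = L.length := by
    rw [List.count_eq_length]; intro a ha; simpa using (h a ha).symm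
  have h2 : 1 ≤ L.length := by
    cases L with | nil => simp at hne | cons a l => simp
  omega

theorem filter_finRange_toFinset {n : ℕ} (p : Fin n → Prop) [DecidablePred p] :
    ((List.finRange n).filter (fun j => decide (p j))).toFinset = Finset.univ.filter p := by
  ext j
  simp [List.mem_filter]

theorem filter_finRange_length {n : ℕ} (p : Fin n → Prop) [DecidablePred p] :
    ((List.finRange n).filter (fun j => decide (p j))).length = (Finset.univ.filter p).card := by
  rw [← filter_finRange_toFinset p, List.toFinset_card_of_nodup]
  exact (List.nodup_finRange n).filter _

theorem length_filter_finRange {n : ℕ} (pb : Fin n → Bool) :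
    ((List.finRange n).filter pb).length = (Finset.univ.filter (fun j => pb j = true)).card := by
  rw [← List.toFinset_card_of_nodup ((List.nodup_finRange n).filter _)]
  congr 1
  ext j
  simp [List.mem_filter]

theorem count_map_ge {n : ℕ} {M : Type*} [DecidableEq M]
    (pb : Fin n → Bool) (F : Fin n → M) (v : M)
    (G : Finset (Fin n)) (hG : ∀ j ∈ G, pb j = true ∧ F j = v) :
    G.card ≤ (((List.finRange n).filter pb).map F).count v := by
  set l := (List.finRange n).filter pb with hl
  have hnd : l.Nodup := (List.nodup_finRange n).filter _
  have h1 : (l.map F).count v = (l.filter (fun j => F j == v)).length := by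
    rw [List.count_eq_countP, List.countP_map, List.countP_eq_length_filter]
    rfl
  rw [h1]
  have hnd2 : (l.filter (fun j => F j == v)).Nodup := hnd.filter _
  rw [← List.toFinset_card_of_nodup hnd2]
  apply Finset.card_le_card
  intro j hj
  rw [List.mem_toFinset, List.mem_filter]
  obtain ⟨h1, h2⟩ := hG j hj
  constructor
  · rw [hl, List.mem_filter]; simp [h1, List.mem_finRange]
  · simp [h2]

section Protocol

variable {n f : ℕ} {S : Fin n} {D : Finset (Fin n)} {M : Type*} [LinearOrder M] [Inhabited M]

theorem route_append {ζ : List (Fin n)} {j : Fin n} (hζ : IsRoute n f S ζ) (hj : j ∉ ζ)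
    (hlen : ζ.length + 1 ≤ f) : IsRoute n f S (ζ ++ [j]) := by
  obtain ⟨h1, h2, h3, h4⟩ := hζ
  refine ⟨by simp [List.nodup_append, h1, hj]; intro a ha h; exact hj (h ▸ ha), ?_, by simp, by simp; omega⟩
  cases ζ with
  | nil => simp at h3
  | cons a l => simpa using h2

theorem honestPrimary_append {ζ : List (Fin n)} {j : Fin n} (hj : j ∉ D) :
    HonestPrimary D (ζ ++ [j]) := by
  intro q hq
  rw [List.getLast?_concat] at hq
  simp at hq
  rwa [← hq]

theorem toFinset_append_singleton (ζ : List (Fin n)) (j : Fin n) :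
    (ζ ++ [j]).toFinset = insert j ζ.toFinset := by
  simp [List.toFinset_append]

theorem mem_append_singleton {ζ : List (Fin n)} {j i : Fin n} :
    i ∉ ζ ++ [j] ↔ i ∉ ζ ∧ i ≠ j := by
  simp [not_or]

theorem card_compl_toFinset {ζ : List (Fin n)} (hnd : ζ.Nodup) :
    ζ.toFinsetᶜ.card + ζ.length = n := by
  have h1 := Finset.card_add_card_compl ζ.toFinset
  rw [List.toFinset_card_of_nodup hnd] at h1
  simp [Fintype.card_fin] at h1
  omega

end Protocol

section Main

variable {n f : ℕ} {S : Fin n} {D : Finset (Fin n)} {M : Type*} [LinearOrder M] [Inhabited M]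

theorem maj_filter_map (d : M) (pb : Fin n → Bool) (F : Fin n → M) (v : M)
    (G : Finset (Fin n)) (hG : ∀ j ∈ G, pb j = true ∧ F j = v)
    (hmaj : (Finset.univ.filter (fun j => pb j = true)).card < 2 * G.card) :
    maj d (((List.finRange n).filter pb).map F) = v := by
  apply maj_eq_of_majority
  have h1 := count_map_ge pb F v G hG
  have h2 : (((List.finRange n).filter pb).map F).length
      = (Finset.univ.filter (fun j => pb j = true)).card := by
    rw [List.length_map, length_filter_finRange]
  omega

theorem maj_cons_filter_map (d : M) (a : M) (pb : Fin n → Bool) (F : Fin n → M) (v : M)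
    (ha : a = v) (G : Finset (Fin n)) (hG : ∀ j ∈ G, pb j = true ∧ F j = v)
    (hmaj : (Finset.univ.filter (fun j => pb j = true)).card + 1 < 2 * (G.card + 1)) :
    maj d (a :: ((List.finRange n).filter pb).map F) = v := by
  apply maj_eq_of_majority
  have h1 := count_map_ge pb F v G hG
  have h2 : (((List.finRange n).filter pb).map F).length
      = (Finset.univ.filter (fun j => pb j = true)).card := by
    rw [List.length_map, length_filter_finRange]
  subst ha
  rw [List.length_cons, List.count_cons_self]
  omega

theorem valid {A : Adversary n f S D M} (hnf : 2 * f + 1 ≤ n) (hD : D.card = f) :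
    ∀ k : ℕ,
      (∀ ζ v, IsRoute n f S ζ → ζ.length + k = f → HonestPrimary D ζ →
        (∀ j, j ∉ ζ → A.w ζ j = v) →
        2 * f + ζ.length ≤ n + 2 * (ζ.toFinset ∩ D).card →
        ∀ i, i ∉ ζ → i ∉ D → gAux A k ζ i = v) ∧
      (∀ ζ v, IsRoute n f S ζ → ζ.length + k = f →
        (∀ j, j ∉ ζ → j ∉ D → A.w ζ j = v) →
        2 * f + ζ.length + 1 ≤ n + 2 * (ζ.toFinset ∩ D).card →
        ∀ i, i ∉ ζ → i ∉ D → gAux A k ζ i = v) := by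
  intro k
  induction k with
  | zero =>
    constructor
    · -- P bottom : honest primary, all entries equal v
      intro ζ v hζ hk hhp hw hcond i hi hiD
      simp only [gAux]
      apply maj_const
      · simp
      · intro x hx
        rcases List.mem_cons.1 hx with rfl | hx'
        · exact hw i hi
        · rcases List.mem_map.1 hx' with ⟨j, hjl, rfl⟩
          have hj2 : j ∉ ζ ∧ j ≠ i := by
            have := (List.mem_filter.1 hjl).2
            simpa using this
          rw [A.A4 ζ j i hζ hj2.1 hi (Ne.symm hj2.2) (Or.inr hhp)]
          exact hw j hj2.1
    · -- Q bottom : counting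
      intro ζ v hζ hk hw hcond i hi hiD
      simp only [gAux]
      apply maj_cons_filter_map _ _ _ _ _ (hw i hi hiD) ((ζ.toFinsetᶜ \ D).erase i)
      · intro j hj
        rw [Finset.mem_erase] at hj
        obtain ⟨hji, hj'⟩ := hj
        rw [Finset.mem_sdiff, Finset.mem_compl, List.mem_toFinset] at hj'
        obtain ⟨hjζ, hjD⟩ := hj'
        constructor
        · simp [hjζ, hji]
        · rw [A.A4 ζ j i hζ hjζ hi (Ne.symm hji) (Or.inl hjD)]
          exact hw j hjζ hjD
      · -- arithmetic
        have hfil : Finset.univ.filter (fun j => (decide (j ∉ ζ ∧ j ≠ i)) = true)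
            = (ζ.toFinsetᶜ).erase i := by
          ext x
          simp [Finset.mem_erase, and_comm]
        rw [hfil]
        have hiZ : i ∈ ζ.toFinsetᶜ := by simpa using hi
        have hiZD : i ∈ ζ.toFinsetᶜ \ D := by simp [hiZ, hiD]
        have c1 : ((ζ.toFinsetᶜ \ D).erase i).card + 1 = (ζ.toFinsetᶜ \ D).card :=
          Finset.card_erase_add_one hiZD
        have c2 : ((ζ.toFinsetᶜ).erase i).card + 1 = (ζ.toFinsetᶜ).card :=
          Finset.card_erase_add_one hiZ
        have c3 : (ζ.toFinsetᶜ ∩ D).card + (ζ.toFinsetᶜ \ D).card = (ζ.toFinsetᶜ).card :=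
          Finset.card_inter_add_card_sdiff _ _
        have c4 : (D ∩ ζ.toFinset).card + (D \ ζ.toFinset).card = f := by
          rw [Finset.card_inter_add_card_sdiff, hD]
        have c5 : (ζ.toFinset ∩ D).card = (D ∩ ζ.toFinset).card := by rw [Finset.inter_comm]
        have c6 : (ζ.toFinsetᶜ ∩ D) = (D \ ζ.toFinset) := by
          ext x; simp [and_comm]
        have c7 : (ζ.toFinsetᶜ).card + ζ.length = n := card_compl_toFinset hζ.1
        rw [c6] at c3
        omega
  | succ k ih =>
    obtain ⟨ihP, ihQ⟩ := ih
    -- value of an honest child (full constancy via A2, honest primary)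
    have childP : ∀ (ζ : List (Fin n)) (j : Fin n), IsRoute n f S ζ → ζ.length + (k + 1) = f →
        j ∉ ζ → j ∉ D →
        2 * f + ζ.length + 1 ≤ n + 2 * (ζ.toFinset ∩ D).card →
        ∀ m, m ∉ ζ → m ≠ j → m ∉ D → gAux A k (ζ ++ [j]) m = A.w ζ j := by
      intro ζ j hζ hk hj hjD hcond m hm hmj hmD
      have hroute' : IsRoute n f S (ζ ++ [j]) := route_append hζ hj (by omega)
      have hlen' : (ζ ++ [j]).length + k = f := by
        simp only [List.length_append, List.length_singleton]
        omega
      apply ihP (ζ ++ [j]) (A.w ζ j) hroute' hlen' (honestPrimary_append hjD)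
        (fun m' hm' => A.A2 ζ j hζ hj hjD hroute' m' hm')
        ?_ m (mem_append_singleton.2 ⟨hm, hmj⟩) hmD
      rw [toFinset_append_singleton, Finset.insert_inter_of_notMem hjD]
      simp only [List.length_append, List.length_singleton]
      omega
    -- value of a dishonest child of an honest-primary route (constancy on honest via A3)
    have childQ : ∀ (ζ : List (Fin n)) (j : Fin n), IsRoute n f S ζ → ζ.length + (k + 1) = f →
        HonestPrimary D ζ → j ∉ ζ → j ∈ D →
        2 * f + ζ.length ≤ n + 2 * (ζ.toFinset ∩ D).card →
        ∀ m, m ∉ ζ → m ≠ j → m ∉ D → gAux A k (ζ ++ [j]) m = A.w ζ j := by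
      intro ζ j hζ hk hhp hj hjD hcond m hm hmj hmD
      have hroute' : IsRoute n f S (ζ ++ [j]) := route_append hζ hj (by omega)
      have hlen' : (ζ ++ [j]).length + k = f := by
        simp only [List.length_append, List.length_singleton]
        omega
      apply ihQ (ζ ++ [j]) (A.w ζ j) hroute' hlen'
        (fun m' hm' hm'D => A.A3 ζ j hζ hhp hj hjD hroute' m' hm' hm'D)
        ?_ m (mem_append_singleton.2 ⟨hm, hmj⟩) hmD
      rw [toFinset_append_singleton, Finset.insert_inter_of_mem hjD,
        Finset.card_insert_of_notMem (by simp [hj])]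
      simp only [List.length_append, List.length_singleton]
      omega
    constructor
    · -- P step
      intro ζ v hζ hk hhp hw hcond i hi hiD
      simp only [gAux]
      by_cases hc : 2 * f + ζ.length + 1 ≤ n + 2 * (ζ.toFinset ∩ D).card
      · -- all entries equal v
        apply maj_const
        · have hil : i ∈ (List.finRange n).filter (fun j => decide (j ∉ ζ)) := by
            simp [List.mem_filter, hi]
          exact List.ne_nil_of_mem (List.mem_map_of_mem hil)
        · intro x hx
          rcases List.mem_map.1 hx with ⟨j, hjl, rfl⟩
          have hj : j ∉ ζ := by
            have := (List.mem_filter.1 hjl).2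
            simpa using this
          by_cases hji : j = i
          · rw [if_pos hji]; exact hw i hi
          · rw [if_neg hji]
            by_cases hjD : j ∈ D
            · rw [childQ ζ j hζ hk hhp hj hjD hcond i hi (fun h => hji h.symm) hiD]
              exact hw j hj
            · rw [childP ζ j hζ hk hj hjD hc i hi (fun h => hji h.symm) hiD]
              exact hw j hj
      · -- tight case: own entry + dishonest children
        apply maj_filter_map _ _ _ _ (insert i (D \ ζ.toFinset))
        · intro j hj
          rcases Finset.mem_insert.1 hj with rfl | hj'
          · exact ⟨by simp [hi], by rw [if_pos rfl]; exact hw j hi⟩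
          · rw [Finset.mem_sdiff, List.mem_toFinset] at hj'
            obtain ⟨hjD, hjζ⟩ := hj'
            have hji : j ≠ i := fun h => hiD (h ▸ hjD)
            refine ⟨by simp [hjζ], ?_⟩
            rw [if_neg hji, childQ ζ j hζ hk hhp hjζ hjD hcond i hi (fun h => hji h.symm) hiD]
            exact hw j hjζ
        · have hfil : Finset.univ.filter (fun j => (decide (j ∉ ζ)) = true)
              = ζ.toFinsetᶜ := by
            ext x; simp
          rw [hfil, Finset.card_insert_of_notMem (by simp [hiD])]
          have c4 : (D ∩ ζ.toFinset).card + (D \ ζ.toFinset).card = f := by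
            rw [Finset.card_inter_add_card_sdiff, hD]
          have c5 : (ζ.toFinset ∩ D).card = (D ∩ ζ.toFinset).card := by rw [Finset.inter_comm]
          have c7 : (ζ.toFinsetᶜ).card + ζ.length = n := card_compl_toFinset hζ.1
          omega
    · -- Q step
      intro ζ v hζ hk hw hcond i hi hiD
      simp only [gAux]
      apply maj_filter_map _ _ _ _ (ζ.toFinsetᶜ \ D)
      · intro j hj
        rw [Finset.mem_sdiff, Finset.mem_compl, List.mem_toFinset] at hj
        obtain ⟨hjζ, hjD⟩ := hj
        refine ⟨by simp [hjζ], ?_⟩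
        by_cases hji : j = i
        · rw [if_pos hji]; subst hji; exact hw j hjζ hjD
        · rw [if_neg hji, childP ζ j hζ hk hjζ hjD hcond i hi (fun h => hji h.symm) hiD]
          exact hw j hjζ hjD
      · have hfil : Finset.univ.filter (fun j => (decide (j ∉ ζ)) = true)
            = ζ.toFinsetᶜ := by
          ext x; simp
        rw [hfil]
        have c3 : (ζ.toFinsetᶜ ∩ D).card + (ζ.toFinsetᶜ \ D).card = (ζ.toFinsetᶜ).card :=
          Finset.card_inter_add_card_sdiff _ _
        have c4 : (D ∩ ζ.toFinset).card + (D \ ζ.toFinset).card = f := by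
          rw [Finset.card_inter_add_card_sdiff, hD]
        have c5 : (ζ.toFinset ∩ D).card = (D ∩ ζ.toFinset).card := by rw [Finset.inter_comm]
        have c6 : (ζ.toFinsetᶜ ∩ D) = (D \ ζ.toFinset) := by
          ext x; simp [and_comm]
        have c7 : (ζ.toFinsetᶜ).card + ζ.length = n := card_compl_toFinset hζ.1
        rw [c6] at c3
        omega

theorem common {A : Adversary n f S D M} (hnf : 2 * f + 1 ≤ n) (hD : D.card = f) :
    ∀ (k : ℕ) (ζ : List (Fin n)), IsRoute n f S ζ → ζ.length + k = f →
      (∀ x ∈ ζ, x ∈ D) →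
      ∀ i i' : Fin n, i ∉ ζ → i' ∉ ζ → i ∉ D → i' ∉ D →
        gAux A k ζ i = gAux A k ζ i' := by
  intro k
  induction k with
  | zero =>
    intro ζ hζ hk hsub i i' hi hi' hiD hi'D
    have hZD : ζ.toFinset = D := by
      apply Finset.eq_of_subset_of_card_le
      · intro x hx
        exact hsub x (List.mem_toFinset.1 hx)
      · rw [List.toFinset_card_of_nodup hζ.1]
        omega
    have hback : ∀ j : Fin n, j ∉ ζ → j ∉ D := by
      intro j hj hjD
      exact hj (List.mem_toFinset.1 (hZD ▸ hjD))
    -- both sides are maj of the multiset { w ζ j : j ∉ ζ }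
    suffices H : ∀ m : Fin n, m ∉ ζ → m ∉ D →
        gAux A 0 ζ m = maj default (((List.finRange n).filter
          (fun j => decide (j ∉ ζ))).map (A.w ζ)) by
      rw [H i hi hiD, H i' hi' hi'D]
    intro m hm hmD
    simp only [gAux]
    set l := (List.finRange n).filter (fun j => decide (j ∉ ζ)) with hl
    set lm := (List.finRange n).filter (fun j => decide (j ∉ ζ ∧ j ≠ m)) with hlm
    have hml : m ∈ l := by
      rw [hl, List.mem_filter]
      simp [hm]
    have hnd : l.Nodup := (List.nodup_finRange n).filter _
    have h0 : lm = l.filter (fun j => decide (j ≠ m)) := by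
      rw [hl, List.filter_filter, hlm]
      apply List.filter_congr
      intro x _
      exact (decide_and' (x ∉ ζ) (x ≠ m)).trans (Bool.and_comm _ _)
    have h1 : l.filter (fun x => x != m) = l.filter (fun j => decide (j ≠ m)) := by
      apply List.filter_congr
      intro x _
      by_cases hxm : x = m <;> simp [hxm]
    have hperm : l.Perm (m :: lm) := by
      have h2 := List.perm_cons_erase hml
      rwa [List.Nodup.erase_eq_filter hnd m, h1, ← h0] at h2
    have h3 : lm.map (fun j => A.u ζ j m) = lm.map (A.w ζ) := by
      apply List.map_congr_left
      intro j hj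
      have hj2 : j ∉ ζ ∧ j ≠ m := by
        have := (List.mem_filter.1 (h0 ▸ hj : j ∈ l.filter (fun j => decide (j ≠ m))))
        rw [hlm, List.mem_filter] at hj
        simpa using hj.2
      exact A.A4 ζ j m hζ hj2.1 hm (Ne.symm hj2.2) (Or.inl (hback j hj2.1))
    rw [h3]
    apply maj_perm
    have := (hperm.map (A.w ζ)).symm
    simpa using this
  | succ k ih =>
    intro ζ hζ hk hsub i i' hi hi' hiD hi'D
    by_cases hii' : i = i'
    · rw [hii']
    have hlen1 : 1 ≤ ζ.length := hζ.2.2.1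
    -- any honest child takes the common value A.w ζ j (for any honest verifier)
    have dchild : ∀ j : Fin n, j ∉ ζ → j ∉ D →
        ∀ m, m ∉ ζ → m ≠ j → m ∉ D → gAux A k (ζ ++ [j]) m = A.w ζ j := by
      intro j hj hjD m hm hmj hmD
      have hroute' : IsRoute n f S (ζ ++ [j]) := route_append hζ hj (by omega)
      have hlen' : (ζ ++ [j]).length + k = f := by
        simp only [List.length_append, List.length_singleton]
        omega
      apply (valid hnf hD k).1 (ζ ++ [j]) (A.w ζ j) hroute' hlen'
        (honestPrimary_append hjD)
        (fun m' hm' => A.A2 ζ j hζ hj hjD hroute' m' hm')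
        ?_ m (mem_append_singleton.2 ⟨hm, hmj⟩) hmD
      have hZ : ζ.toFinset ∩ D = ζ.toFinset := by
        apply Finset.inter_eq_left.2
        intro x hx
        exact hsub x (List.mem_toFinset.1 hx)
      rw [toFinset_append_singleton, Finset.insert_inter_of_notMem hjD, hZ,
        List.toFinset_card_of_nodup hζ.1]
      simp only [List.length_append, List.length_singleton]
      omega
    simp only [gAux]
    congr 1
    apply List.map_congr_left
    intro j hjl
    have hj : j ∉ ζ := by
      have := (List.mem_filter.1 hjl).2
      simpa using this
    by_cases hjD : j ∈ D
    · have hji : j ≠ i := fun h => hiD (h ▸ hjD)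
      have hji' : j ≠ i' := fun h => hi'D (h ▸ hjD)
      rw [if_neg hji, if_neg hji']
      have hroute' : IsRoute n f S (ζ ++ [j]) := route_append hζ hj (by omega)
      have hlen' : (ζ ++ [j]).length + k = f := by
        simp only [List.length_append, List.length_singleton]
        omega
      apply ih (ζ ++ [j]) hroute' hlen'
      · intro x hx
        rcases List.mem_append.1 hx with hx' | hx'
        · exact hsub x hx'
        · rw [List.mem_singleton] at hx'
          rwa [hx']
      · exact mem_append_singleton.2 ⟨hi, Ne.symm hji⟩
      · exact mem_append_singleton.2 ⟨hi', Ne.symm hji'⟩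
      · exact hiD
      · exact hi'D
    · by_cases hji : j = i
      · subst hji
        rw [if_pos rfl, if_neg (fun h : j = i' => hii' h)]
        exact (dchild j hj hjD i' hi' (fun h => hii' h.symm) hi'D).symm
      · by_cases hji' : j = i'
        · subst hji'
          rw [if_neg hji, if_pos rfl]
          exact dchild j hj hjD i hi (fun h => hji h.symm) hiD
        · rw [if_neg hji, if_neg hji']
          rw [dchild j hj hjD i hi (fun h => hji h.symm) hiD,
            dchild j hj hjD i' hi' (fun h => hji' h.symm) hi'D]

end Main

/-- **Fault tolerance `n ≥ 2f + 1` (Theorem 1).**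
Assume `n ≥ 2f + 1` and the set `D` of dishonest players has exactly `f` elements.
Then for every adversary assignment `(w, u)` satisfying (A1)–(A4):
(IC1) any two honest players `i, i'` distinct from `S` have equal outputs
`g([S], i) = g([S], i')`; and (IC2) if moreover the initial primary `S` is honest,
then `g([S], i) = m_S = w([S], i)` for every honest player `i ≠ S`, where `w([S], i)`
is `S`'s common multicast value.  That is, the quantum Byzantine agreement protocol
reaches consensus with fault tolerance `n ≥ 2f + 1`. -/
theorem consensus_fault_tolerance
    {n f : ℕ} {S : Fin n} {D : Finset (Fin n)} {M : Type*} [LinearOrder M] [Inhabited M]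
    (hn : 2 ≤ n) (hf : 1 ≤ f) (hnf : 2 * f + 1 ≤ n) (hD : D.card = f)
    (A : Adversary n f S D M) :
    (∀ i i' : Fin n, i ∉ D → i' ∉ D → i ≠ S → i' ≠ S → g A [S] i = g A [S] i') ∧
    (S ∉ D → ∀ i : Fin n, i ∉ D → i ≠ S → g A [S] i = A.w [S] i) := by
  have hroute : IsRoute n f S [S] := ⟨by simp, rfl, by simp, hf⟩
  have hIC2 : S ∉ D → ∀ i : Fin n, i ∉ D → i ≠ S → g A [S] i = A.w [S] i := by
    intro hS i hiD hiS
    have hhp : HonestPrimary D [S] := by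
      intro q hq
      simp only [List.getLast?_singleton, Option.mem_def, Option.some.injEq] at hq
      rwa [← hq]
    show gAux A (f - 1) [S] i = A.w [S] i
    apply (valid hnf hD (f - 1)).1 [S] (A.w [S] i) hroute
      (by simp only [List.length_singleton]; omega) hhp
      (fun j hj => A.A1 [S] hroute hhp j i hj (by simp [hiS]))
      (by simp only [List.length_singleton]; omega) i (by simp [hiS]) hiD
  refine ⟨?_, hIC2⟩
  intro i i' hiD hi'D hiS hi'S
  by_cases hS : S ∈ D
  · show gAux A (f - 1) [S] i = gAux A (f - 1) [S] i'
    apply common hnf hD (f - 1) [S] hroute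
      (by simp only [List.length_singleton]; omega)
      (by intro x hx; rw [List.mem_singleton] at hx; rwa [hx])
      i i' (by simp [hiS]) (by simp [hi'S]) hiD hi'D
  · rw [hIC2 hS i hiD hiS, hIC2 hS i' hi'D hi'S]
    have hhp : HonestPrimary D [S] := by
      intro q hq
      simp only [List.getLast?_singleton, Option.mem_def, Option.some.injEq] at hq
      rwa [← hq]
    exact A.A1 [S] hroute hhp i i' (by simp [hiS]) (by simp [hi'S])


end QBA
end

section
/- (Lemma 2.) Suppose M contains two distinct elements m1 ≠ m2. Let ζ be a route whose primary is honest, and let p and r be two distinct dishonest backups of ζ such that ζ ++ [p, r] is a route. Then there exists an adversary assignment (w, u) satisfying (A1)-(A4) such that w(ζ, i) = m1 for every backup i of ζ, while w(ζ ++ [p, r], i) = m2 for every honest backup i of ζ ++ [p, r]; that is, the messages multicast two rounds below an honest node, through two consecutive dishonest primaries, can be totally inconsistent with the honest node's message. -/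
namespace QBA

/-- **Lemma 2.** Suppose `M` contains two distinct elements `m1 ≠ m2`.  Let `ζ` be a
route whose primary is honest, and let `p` and `r` be two distinct dishonest backups
of `ζ` such that `ζ ++ [p, r]` is a route.  Then there exists an adversary assignment
`(w, u)` satisfying (A1)–(A4) such that `w(ζ, i) = m1` for every backup `i` of `ζ`,
while `w(ζ ++ [p, r], i) = m2` for every honest backup `i` of `ζ ++ [p, r]`: the
messages multicast two rounds below an honest node, through two consecutive dishonest
primaries, can be totally inconsistent with the honest node's message. -/
theorem lemma2_consistency_disrupted
    {n f : ℕ} {S : Fin n} {D : Finset (Fin n)} {M : Type*} [LinearOrder M]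
    (m1 m2 : M) (hm : m1 ≠ m2)
    (ζ : List (Fin n)) (p r : Fin n)
    (hζ : IsRoute n f S ζ) (hprim : HonestPrimary D ζ)
    (hp : p ∉ ζ) (hpD : p ∈ D) (hr : r ∉ ζ) (hrD : r ∈ D) (hpr : p ≠ r)
    (hroute : IsRoute n f S (ζ ++ [p, r])) :
    ∃ A : Adversary n f S D M,
      (∀ i : Fin n, i ∉ ζ → A.w ζ i = m1) ∧
      (∀ i : Fin n, i ∉ ζ ++ [p, r] → i ∉ D → A.w (ζ ++ [p, r]) i = m2) := by
  classical
  -- helper: prefix of a concat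
  have key : ∀ (l m : List (Fin n)) (a : Fin n), l <+: m ++ [a] → l <+: m ∨ l = m ++ [a] := by
    intro l m a h
    rcases le_or_gt l.length m.length with hle | hlt
    · left
      have := List.prefix_iff_eq_take.mp h
      rw [List.take_append_of_le_length hle] at this
      exact this ▸ List.take_prefix _ _
    · right
      have hlen : (m ++ [a]).length ≤ l.length := by
        simp only [List.length_append, List.length_singleton]
        omega
      exact (h.eq_of_length_le hlen).symm.symm
  have wdef : ∀ η : List (Fin n), (ζ ++ [p, r]) <+: η ∨ ¬ (ζ ++ [p, r]) <+: η := fun _ => em _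
  set W : List (Fin n) → M := fun η => if (ζ ++ [p, r]) <+: η then m2 else m1 with hW
  -- invariance of W under extension
  have hstep : ∀ (η : List (Fin n)) (q : Fin n), q ∉ D → W (η ++ [q]) = W η := by
    intro η q hqD
    by_cases h : (ζ ++ [p, r]) <+: η
    · have : (ζ ++ [p, r]) <+: η ++ [q] := h.trans ⟨[q], rfl⟩
      simp [hW, h, this]
    · by_cases h2 : (ζ ++ [p, r]) <+: η ++ [q]
      · rcases key _ _ _ h2 with h3 | h3
        · exact absurd h3 h
        · exfalso
          have : q = r := by
            have := congrArg List.getLast? h3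
            rw [show ζ ++ [p, r] = (ζ ++ [p]) ++ [r] by simp] at this
            simp [List.getLast?_append] at this
            exact this.symm
          exact hqD (this ▸ hrD)
      · simp [hW, h, h2]
  have hstep2 : ∀ (η : List (Fin n)) (q : Fin n), HonestPrimary D η →
      W (η ++ [q]) = W η := by
    intro η q hη
    by_cases h : (ζ ++ [p, r]) <+: η
    · have : (ζ ++ [p, r]) <+: η ++ [q] := h.trans ⟨[q], rfl⟩
      simp [hW, h, this]
    · by_cases h2 : (ζ ++ [p, r]) <+: η ++ [q]
      · rcases key _ _ _ h2 with h3 | h3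
        · exact absurd h3 h
        · exfalso
          have hη' : η = ζ ++ [p] := by
            rw [show ζ ++ [p, r] = (ζ ++ [p]) ++ [r] by simp] at h3
            have h3' : (ζ ++ [p]).concat r = η.concat q := by
              rw [List.concat_eq_append, List.concat_eq_append]; exact h3
            exact ((List.concat_inj.mp h3').1).symm
          have : p ∉ D := by
            have := hη p
            rw [hη'] at this
            exact this (by simp [List.getLast?_append])
          exact this hpD
      · simp [hW, h, h2]
  refine ⟨⟨fun η _ => W η, fun η j _ => W η, ?_, ?_, ?_, ?_⟩, ?_, ?_⟩
  · intro η _ _ i i' _ _; rfl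
  · intro η q _ _ hqD _ i _; exact hstep η q hqD
  · intro η q _ hη _ _ _ i _ _; exact hstep2 η q hη
  · intro η j i _ _ _ _ _; rfl
  · intro i _
    have : ¬ (ζ ++ [p, r]) <+: ζ := by
      intro h
      have := h.length_le
      simp at this
    simp [hW, this]
  · intro i _ _
    simp [hW, List.prefix_refl]

end QBA
end

section
/- (Safe node counting.) Assume n >= 2f+1 and the set D of dishonest players has exactly f elements. Let ζ be a route of depth d (1 ≤ d ≤ f) whose primary is honest and whose first d−1 entries are all dishonest. Then among the backups of ζ there are exactly n − f − 1 honest players and exactly f − d + 1 dishonest players; in particular the honest backups are at least as numerous as the dishonest backups, and strictly more numerous whenever d ≥ 2. -/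
namespace QBA

/-- **Safe node counting.** Assume `n ≥ 2f + 1` and the set `D` of dishonest players
has exactly `f` elements.  Let `ζ` be a route of depth `d` (`1 ≤ d ≤ f`) whose primary
is honest and whose first `d − 1` entries are all dishonest.  Then among the backups
of `ζ` there are exactly `n − f − 1` honest players and exactly `f − d + 1` dishonest
players; in particular the honest backups are at least as numerous as the dishonest
backups, and strictly more numerous whenever `d ≥ 2`. -/
theorem safe_node_counting
    {n f : ℕ} {S : Fin n} {D : Finset (Fin n)}
    (hn : 2 ≤ n) (hf : 1 ≤ f) (hnf : 2 * f + 1 ≤ n) (hD : D.card = f)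
    (ζ : List (Fin n)) (hζ : IsRoute n f S ζ)
    (hprim : HonestPrimary D ζ) (hpre : ∀ q ∈ ζ.dropLast, q ∈ D) :
    (Finset.univ.filter fun j : Fin n => j ∉ ζ ∧ j ∉ D).card = n - f - 1 ∧
    (Finset.univ.filter fun j : Fin n => j ∉ ζ ∧ j ∈ D).card = f - ζ.length + 1 ∧
    f - ζ.length + 1 ≤ n - f - 1 ∧
    (2 ≤ ζ.length → f - ζ.length + 1 < n - f - 1) := by
  obtain ⟨hnd, hhead, h1, h2⟩ := hζ
  have hne : ζ ≠ [] := by intro h; simp [h] at h1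
  have hLζ : ζ.getLast hne ∈ ζ := List.getLast_mem hne
  have hLD : ζ.getLast hne ∉ D := hprim _ (by simp [List.getLast?_eq_getLast hne])
  have hmemd : ∀ q, q ∈ ζ ↔ q ∈ ζ.dropLast ∨ q = ζ.getLast hne := by
    intro q
    conv_lhs => rw [← List.dropLast_append_getLast hne]
    simp
  have hdl : ζ.dropLast.Nodup := hnd.sublist (List.dropLast_sublist ζ)
  have hcard1 : (Finset.univ.filter fun j : Fin n => j ∉ ζ ∧ j ∈ D).card
      = f - ζ.length + 1 := by
    have heq : (Finset.univ.filter fun j : Fin n => j ∉ ζ ∧ j ∈ D)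
        = D \ ζ.dropLast.toFinset := by
      ext j
      simp only [Finset.mem_filter, Finset.mem_univ, true_and, Finset.mem_sdiff,
        List.mem_toFinset]
      constructor
      · rintro ⟨hjζ, hjD⟩; exact ⟨hjD, fun h => hjζ ((hmemd j).2 (Or.inl h))⟩
      · rintro ⟨hjD, hjd⟩
        refine ⟨fun h => ?_, hjD⟩
        rcases (hmemd j).1 h with h' | h'
        · exact hjd h'
        · exact hLD (h' ▸ hjD)
    rw [heq, Finset.card_sdiff_of_subset (fun j hj => hpre j (List.mem_toFinset.mp hj))]
    rw [List.toFinset_card_of_nodup hdl, List.length_dropLast, hD]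
    omega
  have hcard2 : (Finset.univ.filter fun j : Fin n => j ∉ ζ ∧ j ∉ D).card
      = n - f - 1 := by
    have heq : (Finset.univ.filter fun j : Fin n => j ∉ ζ ∧ j ∉ D)
        = Dᶜ.erase (ζ.getLast hne) := by
      ext j
      simp only [Finset.mem_filter, Finset.mem_univ, true_and, Finset.mem_erase,
        Finset.mem_compl]
      constructor
      · rintro ⟨hjζ, hjD⟩
        exact ⟨fun h => hjζ (h ▸ hLζ), hjD⟩
      · rintro ⟨hjL, hjD⟩
        refine ⟨fun h => ?_, hjD⟩
        rcases (hmemd j).1 h with h' | h'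
        · exact hjD (hpre j h')
        · exact hjL h'
    rw [heq, Finset.card_erase_of_mem (by simp [Finset.mem_compl, hLD]),
      Finset.card_compl, hD, Fintype.card_fin]
  exact ⟨hcard2, hcard1, by omega, by omega⟩

end QBA
end
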